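/- Let 𝓗 be a finite arrangement of linear hyperplanes through the origin in a finite-dimensional real vector space and let (E,γ,δ) be a double representation of its face poset satisfying monotonicity and transitivity. Suppose E_C = 0 for every chamber C of 𝓗. If D_1 and D_2 are codimension-one faces lying on distinct hyperplanes of 𝓗 (i.e. the unique hyperplane containing D_1 differs from the unique hyperplane containing D_2), then φ_{D_1 D_2} = 0. -/

import Mathlib

noncomputable section

variable {V : Type*} [NormedAddCommGroup V] [NormedSpace ℝ V] {ι : Type*}

/-- The sign vector of a point with respect to a family of defining linear forms. -/
def sgnVec (f : ι → V →ₗ[ℝ] ℝ) (x : V) : ι → SignType := fun i => SignType.sign (f i x)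

/-- The face (cell) of the arrangement containing the point `x`:
the level set of the sign-vector map through `x`. -/
def faceOf (f : ι → V →ₗ[ℝ] ℝ) (x : V) : Set V := {y | sgnVec f y = sgnVec f x}

/-- The type of faces (cells) of the arrangement with defining forms `f`. -/
def Face (f : ι → V →ₗ[ℝ] ℝ) : Type _ := {C : Set V // ∃ x : V, C = faceOf f x}

/-- The closure order on faces: `C' ≤ C` iff `C' ⊆ closure C`. -/
def FaceLE {f : ι → V →ₗ[ℝ] ℝ} (C' C : Face f) : Prop := C'.1 ⊆ closure C.1

lemma FaceLE.refl {f : ι → V →ₗ[ℝ] ℝ} (C : Face f) : FaceLE C C := subset_closure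

lemma FaceLE.trans' {f : ι → V →ₗ[ℝ] ℝ} {C'' C' C : Face f}
    (h1 : FaceLE C'' C') (h2 : FaceLE C' C) : FaceLE C'' C :=
  h1.trans (closure_minimal h2 isClosed_closure)

/-- The face of the origin. -/
def faceO (f : ι → V →ₗ[ℝ] ℝ) : Face f := ⟨faceOf f 0, 0, rfl⟩

/-- The face of the origin is below every face in the closure order. -/
lemma faceO_le {f : ι → V →ₗ[ℝ] ℝ} (C : Face f) : FaceLE (faceO f) C := by
  obtain ⟨S, x, rfl⟩ := C
  intro y hy
  have hy0 : ∀ i, f i y = 0 := by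
    intro i
    have : SignType.sign (f i y) = SignType.sign (f i (0 : V)) := congrFun hy i
    simpa using this
  have hten : Filter.Tendsto (fun t : ℝ => y + t • x) (nhdsWithin 0 (Set.Ioi 0)) (nhds y) := by
    have h : Filter.Tendsto (fun t : ℝ => y + t • x) (nhds 0) (nhds (y + (0:ℝ) • x)) :=
      tendsto_const_nhds.add ((continuous_id.smul continuous_const).tendsto 0)
    simpa using h.mono_left nhdsWithin_le_nhds
  refine mem_closure_of_tendsto hten ?_
  filter_upwards [self_mem_nhdsWithin] with t ht
  show y + t • x ∈ faceOf f x
  funext i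
  simp only [sgnVec, map_add, map_smul, hy0 i, zero_add, smul_eq_mul]
  rw [sign_mul, sign_pos ht, one_mul]

universe u

/-- A double representation of the face poset of an arrangement. -/
structure DoubleRep (f : ι → V →ₗ[ℝ] ℝ) where
  E : Face f → ModuleCat.{u} ℂ
  finDim : ∀ C, FiniteDimensional ℂ (E C)
  γ : ∀ C' C : Face f, FaceLE C' C → (E C' →ₗ[ℂ] E C)
  δ : ∀ C' C : Face f, FaceLE C' C → (E C →ₗ[ℂ] E C')
  γ_id : ∀ (C : Face f) (h : FaceLE C C), γ C C h = LinearMap.id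
  δ_id : ∀ (C : Face f) (h : FaceLE C C), δ C C h = LinearMap.id
  γ_comp : ∀ (C'' C' C : Face f) (h1 : FaceLE C'' C') (h2 : FaceLE C' C),
    γ C'' C (h1.trans' h2) = (γ C' C h2).comp (γ C'' C' h1)
  δ_comp : ∀ (C'' C' C : Face f) (h1 : FaceLE C'' C') (h2 : FaceLE C' C),
    δ C'' C (h1.trans' h2) = (δ C'' C' h1).comp (δ C' C h2)

/-- The map `φ_{AB} = γ_{OB} ∘ δ_{AO}` of a double representation. -/
def phiMap {f : ι → V →ₗ[ℝ] ℝ} (ψ : DoubleRep f) (A B : Face f) : ψ.E A →ₗ[ℂ] ψ.E B :=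
  (ψ.γ (faceO f) B (faceO_le B)).comp (ψ.δ (faceO f) A (faceO_le A))

/-- Monotonicity: `γ_{C'C} ∘ δ_{CC'} = id`. -/
def Monotonicity {f : ι → V →ₗ[ℝ] ℝ} (ψ : DoubleRep f) : Prop :=
  ∀ (C' C : Face f) (h : FaceLE C' C), (ψ.γ C' C h).comp (ψ.δ C' C h) = LinearMap.id

/-- A collinear triple of faces. -/
def Collin3 {f : ι → V →ₗ[ℝ] ℝ} (A B C : Face f) : Prop :=
  ∃ a ∈ A.1, ∃ b ∈ B.1, ∃ c ∈ C.1, b ∈ segment ℝ a c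

/-- Transitivity: `φ_{AC} = φ_{BC} ∘ φ_{AB}` for collinear triples. -/
def Transitivity {f : ι → V →ₗ[ℝ] ℝ} (ψ : DoubleRep f) : Prop :=
  ∀ A B C : Face f, Collin3 A B C → phiMap ψ A C = (phiMap ψ B C).comp (phiMap ψ A B)

/-- Two faces of equal dimension and equal span are opposed by a face `D` of one lower
dimension. -/
def Opposed (f : ι → V →ₗ[ℝ] ℝ) (C1 C2 D : Face f) : Prop :=
  C1 ≠ C2 ∧ Submodule.span ℝ C1.1 = Submodule.span ℝ C2.1 ∧
  FaceLE D C1 ∧ FaceLE D C2 ∧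
  Module.finrank ℝ (Submodule.span ℝ D.1) + 1 = Module.finrank ℝ (Submodule.span ℝ C1.1) ∧
  ∀ i, (∀ d ∈ D.1, f i d = 0) → ∀ y ∈ C1.1, ∀ z ∈ C2.1,
    SignType.sign (f i y) = - SignType.sign (f i z) ∧ SignType.sign (f i y) ≠ 0

/-- Invertibility: `φ_{C₁C₂}` is an isomorphism whenever `C₁, C₂` are opposed by a face. -/
def Invertibility {f : ι → V →ₗ[ℝ] ℝ} (ψ : DoubleRep f) : Prop :=
  ∀ C1 C2 D : Face f, Opposed f C1 C2 D → Function.Bijective (phiMap ψ C1 C2)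

/-- Membership in the category `𝓙_𝓗`. -/
def InJ {f : ι → V →ₗ[ℝ] ℝ} (ψ : DoubleRep f) : Prop :=
  Monotonicity ψ ∧ Transitivity ψ ∧ Invertibility ψ

/-- A chamber: a face on which no defining form vanishes. -/
def IsChamber (f : ι → V →ₗ[ℝ] ℝ) (C : Face f) : Prop := ∀ i, ∀ y ∈ C.1, f i y ≠ 0

/-- A codimension-one face: exactly one defining form vanishes on it. -/
def IsCodimOne (f : ι → V →ₗ[ℝ] ℝ) (D : Face f) : Prop := ∃! i, ∀ y ∈ D.1, f i y = 0

/-- A subrepresentation of a double representation. -/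
def IsSubrep {f : ι → V →ₗ[ℝ] ℝ} (ψ : DoubleRep f) (F : ∀ C, Submodule ℂ (ψ.E C)) : Prop :=
  ∀ (C' C : Face f) (h : FaceLE C' C),
    (∀ v ∈ F C', ψ.γ C' C h v ∈ F C) ∧ (∀ v ∈ F C, ψ.δ C' C h v ∈ F C')

/-- Simplicity of a double representation. -/
def IsSimpleRep {f : ι → V →ₗ[ℝ] ℝ} (ψ : DoubleRep f) : Prop :=
  (∃ (C : Face f) (v : ψ.E C), v ≠ 0) ∧
  ∀ F, IsSubrep ψ F → (∀ C, F C = ⊥) ∨ (∀ C, F C = ⊤)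


/-- Let `(E,γ,δ)` be a double representation of the face poset of a finite
real hyperplane arrangement satisfying monotonicity and transitivity, with `E_C = 0` for
every chamber `C`. If `D₁, D₂` are codimension-one faces lying on distinct hyperplanes,
then `φ_{D₁D₂} = 0`. -/
theorem statement14 {V : Type*} [NormedAddCommGroup V] [NormedSpace ℝ V]
    [FiniteDimensional ℝ V] {ι : Type*} [Finite ι]
    (f : ι → V →ₗ[ℝ] ℝ) (hf : ∀ i, f i ≠ 0)
    (hker : ∀ p q : ι, LinearMap.ker (f p) = LinearMap.ker (f q) → p = q)
    (ψ : DoubleRep f) (hmono : Monotonicity ψ) (htrans : Transitivity ψ)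
    (hchamber : ∀ C : Face f, IsChamber f C → ∀ v : ψ.E C, v = 0)
    (D1 D2 : Face f) (hD1 : IsCodimOne f D1) (hD2 : IsCodimOne f D2)
    (hdist : ∀ p q : ι, (∀ y ∈ D1.1, f p y = 0) → (∀ y ∈ D2.1, f q y = 0) →
      LinearMap.ker (f p) ≠ LinearMap.ker (f q)) :
    phiMap ψ D1 D2 = 0 := by
  obtain ⟨p, hp, hpu⟩ := hD1
  obtain ⟨q, hq, hqu⟩ := hD2
  obtain ⟨x1, hx1⟩ := D1.2
  obtain ⟨x2, hx2⟩ := D2.2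
  have hx1mem : x1 ∈ D1.1 := by rw [hx1]; exact rfl
  have hx2mem : x2 ∈ D2.1 := by rw [hx2]; exact rfl
  -- if a form vanishes at the base point, it vanishes on the whole face
  have hvan1 : ∀ i, f i x1 = 0 → ∀ y ∈ D1.1, f i y = 0 := by
    intro i hi y hy
    rw [hx1] at hy
    have := congrFun hy i
    simp only [sgnVec, hi, sign_zero] at this
    exact sign_eq_zero_iff.mp this
  have hvan2 : ∀ i, f i x2 = 0 → ∀ y ∈ D2.1, f i y = 0 := by
    intro i hi y hy
    rw [hx2] at hy
    have := congrFun hy i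
    simp only [sgnVec, hi, sign_zero] at this
    exact sign_eq_zero_iff.mp this
  have hpx1 : f p x1 = 0 := hp x1 hx1mem
  have hp2 : f p x2 ≠ 0 := by
    intro h0
    have hpq : p = q := hqu p (hvan2 p h0)
    have := hdist p q hp hq
    rw [hpq] at this
    exact this rfl
  -- the path from x1 towards x2
  set F : ℝ → V := fun t => x1 + t • (x2 - x1) with hF
  have hev1 : ∀ᶠ t in nhdsWithin (0:ℝ) (Set.Ioi 0), ∀ i, i ≠ p → f i (F t) ≠ 0 := by
    rw [Filter.eventually_all]
    intro i
    by_cases hip : i = p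
    · exact Filter.Eventually.of_forall (fun t h => absurd hip h)
    · have hix1 : f i x1 ≠ 0 := fun h0 => hip (hpu i (hvan1 i h0))
      have hcont : ContinuousAt (fun t : ℝ => f i (F t)) 0 :=
        ((f i).continuous_of_finiteDimensional.comp (continuous_const.add
          (continuous_id.smul continuous_const))).continuousAt
      have hFi0 : f i (F 0) ≠ 0 := by simpa [hF] using hix1
      have h1 : ∀ᶠ z in nhdsWithin (0:ℝ) (Set.Ioi 0), f i (F z) ≠ 0 :=
        (hcont.eventually_ne hFi0).filter_mono nhdsWithin_le_nhds
      exact h1.mono (fun z hz _ => hz)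
  have hev2 : ∀ᶠ t in nhdsWithin (0:ℝ) (Set.Ioi 0), t ∈ Set.Ioo (0:ℝ) 1 :=
    Ioo_mem_nhdsGT_of_mem (by constructor <;> norm_num)
  obtain ⟨t, ht1, ht2⟩ := (hev1.and hev2).exists
  -- b lies in a chamber
  set b : V := F t with hb
  have hbne : ∀ i, f i b ≠ 0 := by
    intro i
    by_cases hip : i = p
    · subst hip
      have : f i b = t * f i x2 := by
        simp [hb, hF, map_add, map_smul, map_sub, hpx1, smul_eq_mul]
      rw [this]
      exact mul_ne_zero (ne_of_gt ht2.1) hp2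
    · exact ht1 i hip
  set C : Face f := ⟨faceOf f b, b, rfl⟩ with hC
  have hCch : IsChamber f C := by
    intro i y hy
    have := congrFun hy i
    simp only [sgnVec] at this
    intro h0
    rw [h0, sign_zero] at this
    exact hbne i (sign_eq_zero_iff.mp this.symm)
  have hbseg : b ∈ segment ℝ x1 x2 := by
    rw [segment_eq_image']
    exact ⟨t, ⟨le_of_lt ht2.1, le_of_lt ht2.2⟩, rfl⟩
  have hcol : Collin3 D1 C D2 := ⟨x1, hx1mem, b, rfl, x2, hx2mem, hbseg⟩
  rw [htrans D1 C D2 hcol]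
  ext v
  simp only [LinearMap.comp_apply, LinearMap.zero_apply]
  rw [hchamber C hCch (phiMap ψ D1 C v), map_zero]

end
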